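/- Let c be the minimum cardinality of a set I of prime implicants of φ whose covers union to all of W_φ (a minimal prime implicant cover). Then: (a) for every k and every mixture p of k independent distributions that is possible for φ and satisfies p(w) > 0 for every possible world w, one has k ≥ c; and (b) there exists a mixture of c independent distributions that is possible for φ and assigns positive probability to every possible world. -/

import Mathlib

/-- A world is an assignment of Boolean values to `n` variables. -/
abbrev World (n : ℕ) := Fin n → Bool

/-- The independent distribution with parameters `μ`:
`p_μ(w) = ∏ i, μ i ^ (w i) * (1 - μ i) ^ (1 - w i)`. -/
def pInd {n : ℕ} (μ : Fin n → ℝ) (w : World n) : ℝ :=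
  ∏ i, if w i then μ i else 1 - μ i

/-- A partial assignment with domain `D` and values `a` covers the world `w`. -/
def covers {n : ℕ} (D : Set (Fin n)) (a : Fin n → Bool) (w : World n) : Prop :=
  ∀ i ∈ D, w i = a i

/-- The cover of a partial assignment: all worlds agreeing with it on its domain. -/
def coverSet {n : ℕ} (D : Set (Fin n)) (a : Fin n → Bool) : Set (World n) :=
  {w | covers D a w}

/-- A partial assignment is an implicant of `φ` if every world in its cover is possible. -/
def Implicant {n : ℕ} (φ : World n → Bool) (D : Set (Fin n)) (a : Fin n → Bool) : Prop :=
  ∀ w : World n, covers D a w → φ w = true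

/-- A prime implicant: an implicant whose cover is not strictly contained in the cover
of another implicant. -/
def PrimeImplicant {n : ℕ} (φ : World n → Bool) (D : Set (Fin n)) (a : Fin n → Bool) : Prop :=
  Implicant φ D a ∧ ∀ (E : Set (Fin n)) (b : Fin n → Bool),
    Implicant φ E b → ¬ (coverSet D a ⊂ coverSet E b)

/-- The deterministic coordinates of the parameter vector `μ`. -/
def detDom {n : ℕ} (μ : Fin n → ℝ) : Set (Fin n) := {i | μ i = 0 ∨ μ i = 1}

/-- The value assigned by `μ` at a deterministic coordinate. -/
noncomputable def detVal {n : ℕ} (μ : Fin n → ℝ) (i : Fin n) : Bool :=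
  if μ i = 1 then true else false

/-- A distribution over worlds: nonnegative, summing to one. -/
def IsDistribution {n : ℕ} (p : World n → ℝ) : Prop :=
  (∀ w, 0 ≤ p w) ∧ ∑ w, p w = 1

/-- A distribution is possible for `φ` if it vanishes on all impossible worlds. -/
def PossibleDist {n : ℕ} (φ : World n → Bool) (p : World n → ℝ) : Prop :=
  ∀ w, φ w = false → p w = 0

/-- The unit hypercube of parameters. -/
def unitCube (n : ℕ) : Set (Fin n → ℝ) := {μ | ∀ i, μ i ∈ Set.Icc (0:ℝ) 1}

/-- The implicant cube of a partial assignment: coordinates in `D` are fixed,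
the others range over `[0,1]`. -/
def implicantCube {n : ℕ} (D : Set (Fin n)) (a : Fin n → Bool) : Set (Fin n → ℝ) :=
  {μ | (∀ i, μ i ∈ Set.Icc (0:ℝ) 1) ∧ ∀ i ∈ D, μ i = if a i then 1 else 0}

/-- The cubical set of `φ`: the union of the prime implicant cubes. -/
def cubicalSet {n : ℕ} (φ : World n → Bool) : Set (Fin n → ℝ) :=
  ⋃ (D : Set (Fin n)) (a : Fin n → Bool) (_ : PrimeImplicant φ D a), implicantCube D a

/-- The weighted model count `Σ_{w : φ(w)=1} p_μ(w)`. -/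
noncomputable def WMC {n : ℕ} (φ : World n → Bool) (μ : Fin n → ℝ) : ℝ :=
  ∑ w : World n, if φ w then pInd μ w else 0

/-- A world regarded as a point of `[0,1]^n ⊆ ℝ^n`. -/
def worldPoint {n : ℕ} (w : World n) : Fin n → ℝ := fun i => if w i then 1 else 0

/-- An elementary interval is `{0}`, `{1}` or `[0,1]`. -/
def ElemInterval (I : Set ℝ) : Prop := I = {0} ∨ I = {1} ∨ I = Set.Icc 0 1

/-- An elementary cube is a product of elementary intervals. -/
def IsElemCube {n : ℕ} (C : Set (Fin n → ℝ)) : Prop :=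
  ∃ I : Fin n → Set ℝ, (∀ i, ElemInterval (I i)) ∧ C = {x | ∀ i, x i ∈ I i}

lemma pInd_nonneg {n : ℕ} {μ : Fin n → ℝ} (hμ : μ ∈ unitCube n) (w : World n) :
    0 ≤ pInd μ w := by
  apply Finset.prod_nonneg
  intro i _
  rcases hμ i with ⟨h0, h1⟩
  by_cases h : w i <;> simp [h] <;> linarith

lemma pInd_pos {n : ℕ} {μ : Fin n → ℝ} (hμ : μ ∈ unitCube n) (w : World n)
    (h : covers (detDom μ) (detVal μ) w) : 0 < pInd μ w := by
  apply Finset.prod_pos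
  intro i _
  rcases hμ i with ⟨h0, h1⟩
  by_cases hw : w i = true
  · rw [if_pos hw]
    rcases h0.lt_or_eq with hlt | heq
    · exact hlt
    · exfalso
      have hmem : i ∈ detDom μ := Or.inl heq.symm
      have hv := h i hmem
      have hd : detVal μ i = false := by simp [detVal, ← heq]
      rw [hd, hw] at hv
      exact Bool.noConfusion hv
  · rw [if_neg hw]
    rcases h1.lt_or_eq with hlt | heq
    · linarith
    · exfalso
      have hmem : i ∈ detDom μ := Or.inr heq
      have hv := h i hmem
      have hd : detVal μ i = true := by simp [detVal, heq]
      rw [hd] at hv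
      exact hw hv

lemma pInd_zero {n : ℕ} {μ : Fin n → ℝ} (w : World n) (i : Fin n)
    (hi : i ∈ detDom μ) (hne : w i ≠ detVal μ i) : pInd μ w = 0 := by
  apply Finset.prod_eq_zero (Finset.mem_univ i)
  rcases hi with h0 | h1
  · have hd : detVal μ i = false := by
      simp only [detVal, h0]
      norm_num
    rw [hd] at hne
    have hw : w i = true := by simpa using hne
    simp [hw, h0]
  · have hd : detVal μ i = true := by simp [detVal, h1]
    rw [hd] at hne
    have hw : w i = false := by simpa using hne
    simp [hw, h1]

lemma exists_prime_ext {n : ℕ} (φ : World n → Bool) (D : Set (Fin n)) (a : Fin n → Bool)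
    (h : Implicant φ D a) :
    ∃ E b, PrimeImplicant φ E b ∧ coverSet D a ⊆ coverSet E b := by
  classical
  set s : Set (Set (Fin n) × (Fin n → Bool)) :=
    {p | Implicant φ p.1 p.2 ∧ coverSet D a ⊆ coverSet p.1 p.2} with hs
  have hfin : s.Finite := Set.toFinite s
  have hne : s.Nonempty := ⟨(D, a), h, subset_rfl⟩
  obtain ⟨p, hp, hmax⟩ := hfin.exists_maximalFor (fun p => coverSet p.1 p.2) s hne
  refine ⟨p.1, p.2, ⟨hp.1, ?_⟩, hp.2⟩
  intro E b hEb hss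
  have hmem : (E, b) ∈ s := ⟨hEb, hp.2.trans hss.subset⟩
  exact hss.ne (le_antisymm hss.subset (hmax hmem hss.subset))

lemma exists_prime {n : ℕ} (φ : World n → Bool) (hφ : ∃ w, φ w = true) :
    ∃ E b, PrimeImplicant φ E b := by
  obtain ⟨w, hw⟩ := hφ
  have h : Implicant φ Set.univ w := by
    intro w' hw'
    have : w' = w := funext fun i => hw' i (Set.mem_univ i)
    rw [this]; exact hw
  obtain ⟨E, b, hEb, -⟩ := exists_prime_ext φ _ _ h
  exact ⟨E, b, hEb⟩

/-- the minimal number of mixture components needed for a possible mixture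
assigning positive probability to all possible worlds is the size `c` of a minimal prime
implicant cover of `φ`. -/
theorem stmt17 (n : ℕ) (hn : 1 ≤ n) (φ : World n → Bool) (hφ : ∃ w, φ w = true)
    (c : ℕ)
    (hc : c = sInf {k : ℕ | ∃ (D : Fin k → Set (Fin n)) (a : Fin k → Fin n → Bool),
      (∀ j, PrimeImplicant φ (D j) (a j)) ∧
      ∀ w : World n, φ w = true → ∃ j, covers (D j) (a j) w}) :
    -- (a) any possible mixture with full support on the possible worlds has at least `c`
    --     components
    (∀ (k : ℕ) (α : Fin k → ℝ) (μ : Fin k → Fin n → ℝ),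
      (∀ m, 0 ≤ α m) → (∑ m, α m = 1) → (∀ m, μ m ∈ unitCube n) →
      PossibleDist φ (fun w => ∑ m, α m * pInd (μ m) w) →
      (∀ w : World n, φ w = true → 0 < ∑ m, α m * pInd (μ m) w) → c ≤ k) ∧
    -- (b) `c` components suffice
    (∃ (α : Fin c → ℝ) (μ : Fin c → Fin n → ℝ),
      (∀ m, 0 ≤ α m) ∧ (∑ m, α m = 1) ∧ (∀ m, μ m ∈ unitCube n) ∧
      PossibleDist φ (fun w => ∑ m, α m * pInd (μ m) w) ∧
      ∀ w : World n, φ w = true → 0 < ∑ m, α m * pInd (μ m) w) := by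
  classical
  set S := {k : ℕ | ∃ (D : Fin k → Set (Fin n)) (a : Fin k → Fin n → Bool),
      (∀ j, PrimeImplicant φ (D j) (a j)) ∧
      ∀ w : World n, φ w = true → ∃ j, covers (D j) (a j) w} with hS
  -- S is nonempty
  have key : ∀ w : World n, ∃ p : Set (Fin n) × (Fin n → Bool),
      PrimeImplicant φ p.1 p.2 ∧ (φ w = true → covers p.1 p.2 w) := by
    intro w
    by_cases hw : φ w = true
    · have himp : Implicant φ Set.univ w := by
        intro w' hw'
        have : w' = w := funext fun i => hw' i (Set.mem_univ i)
        rw [this]; exact hw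
      obtain ⟨E, b, hEb, hsub⟩ := exists_prime_ext φ Set.univ w himp
      refine ⟨(E, b), hEb, fun _ => ?_⟩
      exact hsub (fun i _ => rfl)
    · obtain ⟨E, b, hEb⟩ := exists_prime φ hφ
      exact ⟨(E, b), hEb, fun h => absurd h hw⟩
  choose F hF1 hF2 using key
  have hSne : S.Nonempty := by
    refine ⟨Fintype.card (World n), ?_⟩
    set e := (Fintype.equivFin (World n)).symm
    refine ⟨fun j => (F (e j)).1, fun j => (F (e j)).2, fun j => hF1 (e j), ?_⟩
    intro w hw
    refine ⟨e.symm w, ?_⟩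
    show covers (F (e (e.symm w))).1 (F (e (e.symm w))).2 w
    rw [e.apply_symm_apply w]
    exact hF2 w hw
  have hcS : c ∈ S := hc ▸ Nat.sInf_mem hSne
  constructor
  · -- part (a)
    intro k α μ hα hαs hμ hposs hsupp
    have key2 : ∀ m : Fin k, ∃ p : Set (Fin n) × (Fin n → Bool),
        PrimeImplicant φ p.1 p.2 ∧
        (0 < α m → coverSet (detDom (μ m)) (detVal (μ m)) ⊆ coverSet p.1 p.2) := by
      intro m
      by_cases hm : 0 < α m
      · have himp : Implicant φ (detDom (μ m)) (detVal (μ m)) := by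
          intro w hw
          by_contra hfw
          have hfw' : φ w = false := by simpa using hfw
          have hz := hposs w hfw'
          have hterm : ∀ m' ∈ Finset.univ, 0 ≤ α m' * pInd (μ m') w :=
            fun m' _ => mul_nonneg (hα m') (pInd_nonneg (hμ m') w)
          have h0 : α m * pInd (μ m) w = 0 :=
            (Finset.sum_eq_zero_iff_of_nonneg hterm).mp hz m (Finset.mem_univ m)
          have hp := pInd_pos (hμ m) w hw
          nlinarith
        obtain ⟨E, b, hEb, hsub⟩ := exists_prime_ext φ _ _ himp
        exact ⟨(E, b), hEb, fun _ => hsub⟩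
      · obtain ⟨E, b, hEb⟩ := exists_prime φ hφ
        exact ⟨(E, b), hEb, fun h => absurd h hm⟩
    choose G hG1 hG2 using key2
    have hkS : k ∈ S := by
      refine ⟨fun j => (G j).1, fun j => (G j).2, fun j => hG1 j, ?_⟩
      intro w hw
      have hpos := hsupp w hw
      have hex : ∃ m, 0 < α m * pInd (μ m) w := by
        by_contra hcon
        push_neg at hcon
        have : ∑ m, α m * pInd (μ m) w ≤ 0 :=
          Finset.sum_nonpos fun m _ => hcon m
        linarith
      obtain ⟨m, hm⟩ := hex
      have hαm : 0 < α m := by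
        rcases (hα m).lt_or_eq with h | h
        · exact h
        · exfalso; rw [← h] at hm; simp at hm
      have hpind : 0 < pInd (μ m) w := by
        rcases (pInd_nonneg (hμ m) w).lt_or_eq with h | h
        · exact h
        · exfalso; rw [← h] at hm; simp at hm
      have hcov : covers (detDom (μ m)) (detVal (μ m)) w := by
        intro i hi
        by_contra hne
        exact absurd (pInd_zero w i hi hne) hpind.ne'
      exact ⟨m, hG2 m hαm hcov⟩
    rw [hc]
    exact Nat.sInf_le hkS
  · -- part (b)
    obtain ⟨D, a, hprime, hcover⟩ := hcS
    have hcpos : 0 < c := by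
      rcases hφ with ⟨w, hw⟩
      obtain ⟨j, -⟩ := hcover w hw
      exact Fin.pos j
    set μ : Fin c → Fin n → ℝ :=
      fun m i => if i ∈ D m then (if a m i then 1 else 0) else 1/2 with hμdef
    have hμcube : ∀ m, μ m ∈ unitCube n := by
      intro m i
      simp only [hμdef]
      split_ifs <;> norm_num
    have hdetmem : ∀ m i, i ∈ D m → i ∈ detDom (μ m) ∧ detVal (μ m) i = a m i := by
      intro m i hi
      constructor
      · by_cases ha : a m i = true
        · exact Or.inr (by simp [hμdef, hi, ha])
        · exact Or.inl (by simp [hμdef, hi, ha])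
      · by_cases ha : a m i = true
        · simp [detVal, hμdef, hi, ha]
        · have : μ m i = 0 := by simp [hμdef, hi, ha]
          simp [detVal, this, ha]
    have hdetsub : ∀ m i, i ∈ detDom (μ m) → i ∈ D m := by
      intro m i hi
      by_contra hni
      have : μ m i = 1/2 := by simp [hμdef, hni]
      rcases hi with h | h <;> rw [this] at h <;> norm_num at h
    refine ⟨fun _ => (c : ℝ)⁻¹, μ, ?_, ?_, hμcube, ?_, ?_⟩
    · intro m
      positivity
    · rw [Finset.sum_const, Finset.card_univ, Fintype.card_fin, nsmul_eq_mul]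
      field_simp
    · intro w hw
      have : ∀ m, pInd (μ m) w = 0 := by
        intro m
        have hnc : ¬ covers (D m) (a m) w := by
          intro hcv
          have := (hprime m).1 w hcv
          rw [this] at hw
          exact Bool.noConfusion hw
        rw [covers] at hnc
        push_neg at hnc
        obtain ⟨i, hi, hne⟩ := hnc
        obtain ⟨hid, hiv⟩ := hdetmem m i hi
        exact pInd_zero w i hid (hiv ▸ hne)
      simp only [this, mul_zero, Finset.sum_const_zero]
    · intro w hw
      obtain ⟨j, hj⟩ := hcover w hw
      have hjpos : 0 < (c : ℝ)⁻¹ * pInd (μ j) w := by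
        have hcov : covers (detDom (μ j)) (detVal (μ j)) w := by
          intro i hi
          have hiD := hdetsub j i hi
          rw [(hdetmem j i hiD).2]
          exact hj i hiD
        have := pInd_pos (hμcube j) w hcov
        positivity
      refine Finset.sum_pos' (fun m _ => ?_) ⟨j, Finset.mem_univ j, hjpos⟩
      exact mul_nonneg (by positivity) (pInd_nonneg (hμcube m) w)
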